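/- Let G be a region intersection graph over a graph H witnessed by connected subgraphs (R_v)_{v∈V(G)}, let (W_x : x ∈ V(T)) be a tree-decomposition of H of adhesion at most ℓ, and let W ⊆ V(G) be a set such that for every pair of distinct vertices u, v ∈ W there exist ℓ+1 pairwise anti-complete subsets Q_1,…,Q_{ℓ+1} of V(G) \ {u,v}, each inducing a connected subgraph of G and each containing a neighbor of u and a neighbor of v. Then there exists a node x ∈ V(T) such that the bag W_x intersects V(R_v) for every v ∈ W. -/

import Mathlib

/-- A set of vertices is connected in `G` if the induced subgraph is connected
(in particular, it is nonempty). -/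
def ConnectedIn {V : Type*} (G : SimpleGraph V) (S : Set V) : Prop :=
  (G.induce S).Connected

/-- `H` is a minor of `G`: there is a minor model of `H` in `G`, i.e. a family of
nonempty, connected, pairwise disjoint branch sets, with an edge of `G` between the
branch sets of any two vertices adjacent in `H`. -/
def IsMinor {α β : Type*} (H : SimpleGraph α) (G : SimpleGraph β) : Prop :=
  ∃ φ : α → Set β,
    (∀ a, ConnectedIn G (φ a)) ∧
    (Pairwise fun a b => Disjoint (φ a) (φ b)) ∧
    (∀ a b : α, H.Adj a b → ∃ u ∈ φ a, ∃ v ∈ φ b, G.Adj u v)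

/-- `H` is an induced minor of `G`: as for a minor model, but two distinct branch sets
are joined by an edge of `G` *iff* the corresponding vertices are adjacent in `H`. -/
def IsInducedMinor {α β : Type*} (H : SimpleGraph α) (G : SimpleGraph β) : Prop :=
  ∃ φ : α → Set β,
    (∀ a, ConnectedIn G (φ a)) ∧
    (Pairwise fun a b => Disjoint (φ a) (φ b)) ∧
    (∀ a b : α, a ≠ b → (H.Adj a b ↔ ∃ u ∈ φ a, ∃ v ∈ φ b, G.Adj u v))

/-- `G` is a region intersection graph over `H`: every vertex `v` of `G` is assigned a
connected subgraph (region) `R v` of `H` such that two distinct vertices of `G` are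
adjacent iff their regions intersect. -/
def IsRIG {α β : Type*} (G : SimpleGraph α) (H : SimpleGraph β) : Prop :=
  ∃ R : α → Set β,
    (∀ v, ConnectedIn H (R v)) ∧
    (∀ u v : α, u ≠ v → (G.Adj u v ↔ (R u ∩ R v).Nonempty))

/-- Identification relation used to build the internal vertices of the `ℓ`-subdivision:
the `i`-th internal vertex of the edge directed as `(u, v)` equals the `(ℓ-1-i)`-th
internal vertex of the edge directed as `(v, u)`. -/
def SubdivRel {V : Type*} (G : SimpleGraph V) (ℓ : ℕ) :
    ({d : V × V // G.Adj d.1 d.2} × Fin ℓ) → ({d : V × V // G.Adj d.1 d.2} × Fin ℓ) → Prop :=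
  fun a b => a.1.1.1 = b.1.1.2 ∧ a.1.1.2 = b.1.1.1 ∧ (a.2 : ℕ) + (b.2 : ℕ) + 1 = ℓ

/-- Vertices of the `ℓ`-subdivision of `G`: the branching (original) vertices together
with `ℓ` internal (subdivision) vertices on each edge. -/
def SubdivVert {V : Type*} (G : SimpleGraph V) (ℓ : ℕ) : Type _ :=
  V ⊕ Quot (SubdivRel G ℓ)

/-- The `ℓ`-subdivision `G^(ℓ)` of `G`: every edge of `G` is replaced by a path with
`ℓ + 1` edges (so with `ℓ` new internal vertices). -/
def subdiv {V : Type*} (G : SimpleGraph V) (ℓ : ℕ) : SimpleGraph (SubdivVert G ℓ) :=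
  SimpleGraph.fromRel (fun x y =>
    (ℓ = 0 ∧ ∃ u v : V, G.Adj u v ∧ x = Sum.inl u ∧ y = Sum.inl v) ∨
    (∃ (d : {d : V × V // G.Adj d.1 d.2}) (i : Fin ℓ),
      (i : ℕ) = 0 ∧ x = Sum.inl d.1.1 ∧ y = Sum.inr (Quot.mk _ (d, i))) ∨
    (∃ (d : {d : V × V // G.Adj d.1 d.2}) (i j : Fin ℓ),
      (i : ℕ) + 1 = (j : ℕ) ∧ x = Sum.inr (Quot.mk _ (d, i)) ∧ y = Sum.inr (Quot.mk _ (d, j))))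

namespace Aux10

variable {V : Type*}

/-- There is a walk from `a` to `b` all of whose vertices lie in `S`. -/
def ReachIn (G : SimpleGraph V) (S : Set V) (a b : V) : Prop :=
  ∃ w : G.Walk a b, ∀ x ∈ w.support, x ∈ S

lemma ReachIn.mono {G : SimpleGraph V} {S S' : Set V} (h : S ⊆ S') {a b : V}
    (hr : ReachIn G S a b) : ReachIn G S' a b := by
  obtain ⟨w, hw⟩ := hr; exact ⟨w, fun x hx => h (hw x hx)⟩

lemma ReachIn.trans {G : SimpleGraph V} {S : Set V} {a b c : V}
    (h1 : ReachIn G S a b) (h2 : ReachIn G S b c) : ReachIn G S a c := by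
  obtain ⟨w1, hw1⟩ := h1; obtain ⟨w2, hw2⟩ := h2
  refine ⟨w1.append w2, fun x hx => ?_⟩
  rw [SimpleGraph.Walk.mem_support_append_iff] at hx
  rcases hx with hx | hx
  · exact hw1 x hx
  · exact hw2 x hx

lemma connectedIn_reachIn {G : SimpleGraph V} {S : Set V} (h : ConnectedIn G S)
    {a b : V} (ha : a ∈ S) (hb : b ∈ S) : ReachIn G S a b := by
  obtain ⟨w⟩ := h.preconnected ⟨a, ha⟩ ⟨b, hb⟩
  refine ⟨w.map (SimpleGraph.Embedding.induce S).toHom, fun x hx => ?_⟩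
  erw [SimpleGraph.Walk.support_map, List.mem_map] at hx
  obtain ⟨⟨y, hy⟩, _, rfl⟩ := hx
  exact hy

lemma connectedIn_nonempty {G : SimpleGraph V} {S : Set V} (h : ConnectedIn G S) :
    S.Nonempty := by
  obtain ⟨⟨a, ha⟩⟩ := h.nonempty
  exact ⟨a, ha⟩

/-- Chaining lemma: reachability through a family of internally-reachable sets. -/
lemma chainReach {ι κ : Type*} {X : SimpleGraph ι} {K : SimpleGraph κ} {Q : Set ι} {F : ι → Set κ}
    (hF : ∀ a ∈ Q, ∀ x ∈ F a, ∀ y ∈ F a, ReachIn K (F a) x y)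
    (hadj : ∀ a ∈ Q, ∀ a' ∈ Q, X.Adj a a' → (F a ∩ F a').Nonempty) :
    ∀ {a a' : ι} (w : X.Walk a a'), (∀ s ∈ w.support, s ∈ Q) →
      ∀ x ∈ F a, ∀ y ∈ F a', ReachIn K (⋃ c ∈ Q, F c) x y := by
  intro a a' w
  induction w with
  | nil =>
    intro hw x hx y hy
    have ha := hw _ (SimpleGraph.Walk.start_mem_support _)
    exact (hF _ ha x hx y hy).mono (by intro t ht; exact Set.mem_biUnion ha ht)
  | cons h p ih =>
    intro hw x hx y hy
    have ha := hw _ (SimpleGraph.Walk.start_mem_support _)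
    have he := by
      apply hw; rw [SimpleGraph.Walk.support_cons]
      exact List.mem_cons_of_mem _ p.start_mem_support
    have hw' : ∀ s ∈ p.support, s ∈ Q := by
      intro s hs
      apply hw; rw [SimpleGraph.Walk.support_cons]; exact List.mem_cons_of_mem _ hs
    obtain ⟨m, hma, hme⟩ := hadj _ ha _ he h
    exact ((hF _ ha x hx m hma).mono
      (by intro t ht; exact Set.mem_biUnion ha ht)).trans (ih hw' m hme y hy)

/-- First vertex of a walk lying in `S` (exists since the end lies in `S`). -/
lemma firstIn {ι : Type*} {X : SimpleGraph ι} (S : Set ι) :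
    ∀ {a b : ι} (w : X.Walk a b), b ∈ S →
    ∃ (m : ι) (w1 : X.Walk a m) (w2 : X.Walk m b), w = w1.append w2 ∧ m ∈ S ∧
      ∀ x ∈ w1.support, x ∈ S → x = m := by
  intro a b w
  classical
  induction w with
  | nil =>
    intro hb
    exact ⟨_, SimpleGraph.Walk.nil, SimpleGraph.Walk.nil, rfl, hb, by simp⟩
  | @cons a e b h p ih =>
    intro hb
    by_cases ha : a ∈ S
    · exact ⟨a, SimpleGraph.Walk.nil, SimpleGraph.Walk.cons h p, rfl, ha, by simp⟩
    · obtain ⟨m, w1, w2, heq, hm, hfst⟩ := ih hb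
      refine ⟨m, SimpleGraph.Walk.cons h w1, w2,
        by rw [SimpleGraph.Walk.cons_append, ← heq], hm, ?_⟩
      intro x hx hxS
      rw [SimpleGraph.Walk.support_cons, List.mem_cons] at hx
      rcases hx with rfl | hx
      · exact absurd hxS ha
      · exact hfst x hx hxS

/-- A crossing edge along a path leaving `S`, whose far end avoids the crossing vertex. -/
lemma crossEdge {ι : Type*} {X : SimpleGraph ι} (S : Set ι) :
    ∀ {a b : ι} (w : X.Walk a b), w.IsPath → a ∈ S → b ∉ S →
    ∃ (c d : ι), X.Adj c d ∧ c ∈ S ∧ d ∉ S ∧ ∃ w₂ : X.Walk d b, c ∉ w₂.support := by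
  intro a b w
  classical
  induction w with
  | nil => intro _ ha hb; exact absurd ha hb
  | @cons a e b h p ih =>
    intro hwp ha hb
    by_cases he : e ∈ S
    · exact ih ((SimpleGraph.Walk.cons_isPath_iff _ _).1 hwp).1 he hb
    · exact ⟨a, e, h, ha, he, p, ((SimpleGraph.Walk.cons_isPath_iff _ _).1 hwp).2⟩

/-- A crossing edge along any walk for an arbitrary property. -/
lemma crossProp {ι : Type*} {X : SimpleGraph ι} (P : ι → Prop) :
    ∀ {a b : ι} (w : X.Walk a b), P a → ¬ P b →
    ∃ c d, X.Adj c d ∧ P c ∧ ¬ P d ∧ c ∈ w.support ∧ d ∈ w.support := by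
  intro a b w
  classical
  induction w with
  | nil => intro ha hb; exact absurd ha hb
  | @cons a e b h p ih =>
    intro ha hb
    by_cases he : P e
    · obtain ⟨c, d, hcd, hc, hd, hcs, hds⟩ := ih he hb
      exact ⟨c, d, hcd, hc, hd,
        by rw [SimpleGraph.Walk.support_cons]; exact List.mem_cons_of_mem _ hcs,
        by rw [SimpleGraph.Walk.support_cons]; exact List.mem_cons_of_mem _ hds⟩
    · exact ⟨a, e, h, ha, he, SimpleGraph.Walk.start_mem_support _,
        by rw [SimpleGraph.Walk.support_cons]; exact List.mem_cons_of_mem _ p.start_mem_support⟩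

/-- Appending two paths whose supports meet only at the junction yields a path. -/
lemma isPath_append {ι : Type*} {X : SimpleGraph ι} {a b c : ι} {p : X.Walk a b}
    {q : X.Walk b c} (hp : p.IsPath) (hq : q.IsPath)
    (hdisj : ∀ x, x ∈ p.support → x ∈ q.support → x = b) : (p.append q).IsPath := by
  rw [SimpleGraph.Walk.isPath_def, SimpleGraph.Walk.support_append]
  have hqn : q.support.Nodup := (SimpleGraph.Walk.isPath_def _).1 hq
  have hqc := q.support_eq_cons
  rw [hqc] at hqn
  refine List.Nodup.append ((SimpleGraph.Walk.isPath_def _).1 hp) hqn.of_cons ?_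
  intro x hx hx'
  have hxq : x ∈ q.support := by rw [hqc]; exact List.mem_cons_of_mem _ hx'
  have hxb : x = b := hdisj x hx hxq
  exact (List.nodup_cons.1 hqn).1 (hxb ▸ hx')

end Aux10
namespace Aux10

variable {τ : Type*} {T : SimpleGraph τ}

lemma path_unique (hT : T.IsTree) {a b : τ} {p q : T.Walk a b}
    (hp : p.IsPath) (hq : q.IsPath) : p = q :=
  ((SimpleGraph.isTree_iff_existsUnique_path.1 hT).2 a b).unique hp hq

/-- Everything "on the `x'` side" of the oriented tree edge `x' z`. -/
def Side (T : SimpleGraph τ) (x' z : τ) : Set τ :=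
  {t | ∀ w : T.Walk t z, x' ∈ w.support}

lemma self_mem_side {x' z : τ} : x' ∈ Side T x' z :=
  fun w => w.start_mem_support

lemma not_mem_side (hxz : T.Adj x' z) : z ∉ Side T x' z := by
  intro h
  have := h SimpleGraph.Walk.nil
  simp only [SimpleGraph.Walk.support_nil, List.mem_singleton] at this
  exact hxz.ne this

lemma not_side_walk (hT : T.IsTree) {x' z : τ} (hxz : T.Adj x' z) {s : τ}
    (hs : s ∉ Side T x' z) (w' : T.Walk s x') : z ∈ w'.support := by
  classical
  by_contra hz
  set p : T.Walk s x' := (w'.toPath : T.Walk s x') with hpdef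
  have hp : p.IsPath := w'.toPath.2
  have hzp : z ∉ p.support := fun h => hz (SimpleGraph.Walk.support_toPath_subset w' h)
  have hq : (p.append (SimpleGraph.Walk.cons hxz SimpleGraph.Walk.nil)).IsPath := by
    refine isPath_append hp ?_ ?_
    · rw [SimpleGraph.Walk.cons_isPath_iff]
      exact ⟨SimpleGraph.Walk.IsPath.nil, by simp [hxz.ne]⟩
    · intro x hx hx'
      rw [SimpleGraph.Walk.support_cons, List.mem_cons] at hx'
      have hx'' : x = x' ∨ x = z := by
        rcases hx' with h | h
        · exact Or.inl h
        · simp only [SimpleGraph.Walk.support_nil, List.mem_singleton] at h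
          exact Or.inr h
      rcases hx'' with rfl | rfl
      · rfl
      · exact absurd hx hzp
  apply hs
  intro w
  have heq := path_unique hT hq w.toPath.2
  have hx'm : x' ∈ (p.append (SimpleGraph.Walk.cons hxz SimpleGraph.Walk.nil)).support := by
    rw [SimpleGraph.Walk.mem_support_append_iff]
    exact Or.inl p.end_mem_support
  rw [heq] at hx'm
  exact SimpleGraph.Walk.support_toPath_subset w hx'm

lemma side_cross (hT : T.IsTree) {x' z : τ} (hxz : T.Adj x' z) {t s : τ}
    (ht : t ∈ Side T x' z) (hs : s ∉ Side T x' z) (w : T.Walk t s) :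
    x' ∈ w.support ∧ z ∈ w.support := by
  classical
  have hs' : ∃ ws : T.Walk s z, x' ∉ ws.support := by
    by_contra hcon
    push_neg at hcon
    exact hs hcon
  obtain ⟨ws, hws⟩ := hs'
  have hx' : x' ∈ w.support := by
    have ht' := ht (w.append ws)
    rw [SimpleGraph.Walk.mem_support_append_iff] at ht'
    rcases ht' with h | h
    · exact h
    · exact absurd h hws
  have hz : z ∈ w.support := by
    have hmem := not_side_walk hT hxz hs ((w.dropUntil x' hx').reverse)
    rw [SimpleGraph.Walk.support_reverse, List.mem_reverse] at hmem
    exact SimpleGraph.Walk.support_dropUntil_subset w hx' hmem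
  exact ⟨hx', hz⟩

/-- Median of three vertices in a tree: a vertex on all three connecting paths. -/
lemma median (hT : T.IsTree) {p q r : τ} (wpq : T.Walk p q) (wpr : T.Walk p r)
    (wqr : T.Walk q r) (hpq : wpq.IsPath) (hpr : wpr.IsPath) (hqr : wqr.IsPath) :
    ∃ m, m ∈ wpq.support ∧ m ∈ wpr.support ∧ m ∈ wqr.support := by
  classical
  obtain ⟨m, w1, w2, heq, hm, hfst⟩ :=
    firstIn {x | x ∈ wpq.support} wpr.reverse (wpq.start_mem_support)
  have hw1path : w1.IsPath := by
    have : (w1.append w2).IsPath := heq ▸ hpr.reverse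
    exact this.of_append_left
  have hmpr : m ∈ wpr.support := by
    have : m ∈ wpr.reverse.support := by
      rw [heq, SimpleGraph.Walk.mem_support_append_iff]
      exact Or.inl w1.end_mem_support
    rwa [SimpleGraph.Walk.support_reverse, List.mem_reverse] at this
  -- build the path from q to r through m
  set d : T.Walk m q := wpq.dropUntil m hm with hddef
  have hdpath : d.IsPath := hpq.dropUntil hm
  have hdsub : ∀ x ∈ d.support, x ∈ wpq.support :=
    fun x hx => SimpleGraph.Walk.support_dropUntil_subset wpq hm hx
  have hw3 : (d.reverse.append w1.reverse).IsPath := by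
    refine isPath_append hdpath.reverse hw1path.reverse ?_
    intro x hx hx'
    rw [SimpleGraph.Walk.support_reverse, List.mem_reverse] at hx hx'
    exact hfst x hx' (hdsub x hx)
  have heq3 := path_unique hT hw3 hqr
  refine ⟨m, hm, hmpr, ?_⟩
  have hmd : m ∈ d.reverse.support := by
    rw [SimpleGraph.Walk.support_reverse, List.mem_reverse]
    exact d.start_mem_support
  rw [← heq3, SimpleGraph.Walk.mem_support_append_iff]
  exact Or.inl hmd

/-- `S` is (the vertex set of) a subtree: any two of its vertices are joined inside it. -/
def Conn (T : SimpleGraph τ) (S : Set τ) : Prop :=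
  ∀ a ∈ S, ∀ b ∈ S, ReachIn T S a b

lemma Conn.inter (hT : T.IsTree) {S1 S2 : Set τ} (h1 : Conn T S1) (h2 : Conn T S2) :
    Conn T (S1 ∩ S2) := by
  classical
  intro a ha b hb
  obtain ⟨w, hw⟩ := h1 a ha.1 b hb.1
  obtain ⟨w', hw'⟩ := h2 a ha.2 b hb.2
  have hpp : (w.toPath : T.Walk a b) = (w'.toPath : T.Walk a b) :=
    path_unique hT w.toPath.2 w'.toPath.2
  refine ⟨w.toPath, fun x hx => ?_⟩
  refine ⟨hw x (SimpleGraph.Walk.support_toPath_subset w hx), ?_⟩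
  rw [hpp] at hx
  exact hw' x (SimpleGraph.Walk.support_toPath_subset w' hx)

lemma helly3 (hT : T.IsTree) {S1 S2 S3 : Set τ} (h1 : Conn T S1) (h2 : Conn T S2)
    (h3 : Conn T S3) (h12 : (S1 ∩ S2).Nonempty) (h13 : (S1 ∩ S3).Nonempty)
    (h23 : (S2 ∩ S3).Nonempty) : (S1 ∩ S2 ∩ S3).Nonempty := by
  classical
  obtain ⟨p, hp1, hp2⟩ := h12
  obtain ⟨q, hq1, hq3⟩ := h13
  obtain ⟨r, hr2, hr3⟩ := h23
  obtain ⟨w1, hw1⟩ := h1 p hp1 q hq1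
  obtain ⟨w2, hw2⟩ := h2 p hp2 r hr2
  obtain ⟨w3, hw3⟩ := h3 q hq3 r hr3
  obtain ⟨m, hm1, hm2, hm3⟩ := median hT (w1.toPath : T.Walk p q) (w2.toPath : T.Walk p r) (w3.toPath : T.Walk q r)
    w1.toPath.2 w2.toPath.2 w3.toPath.2
  exact ⟨m, ⟨⟨hw1 m (SimpleGraph.Walk.support_toPath_subset w1 hm1),
    hw2 m (SimpleGraph.Walk.support_toPath_subset w2 hm2)⟩,
    hw3 m (SimpleGraph.Walk.support_toPath_subset w3 hm3)⟩⟩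

lemma hellyList (hT : T.IsTree) :
    ∀ L : List (Set τ), (∀ S ∈ L, Conn T S) →
      (∀ S ∈ L, ∀ S' ∈ L, (S ∩ S').Nonempty) → L ≠ [] → ∃ m, ∀ S ∈ L, m ∈ S
  | [], _, _, hne => absurd rfl hne
  | [S], hc, hp, _ => by
    obtain ⟨m, hm⟩ := hp S (by simp) S (by simp)
    exact ⟨m, by simpa using hm.1⟩
  | S :: S' :: L, hc, hp, _ => by
    have hS : Conn T S := hc S (by simp)
    have hS' : Conn T S' := hc S' (by simp)
    have hSS' : (S ∩ S').Nonempty := hp S (by simp) S' (by simp)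
    obtain ⟨m, hm⟩ := hellyList hT ((S ∩ S') :: L)
      (by
        intro U hU
        rcases List.mem_cons.1 hU with rfl | hU
        · exact hS.inter hT hS'
        · exact hc U (by simp [hU]))
      (by
        intro U hU U' hU'
        rcases List.mem_cons.1 hU with rfl | hU <;> rcases List.mem_cons.1 hU' with rfl | hU'
        · exact ⟨_, hSS'.choose_spec, hSS'.choose_spec⟩
        · obtain ⟨x, hx⟩ := helly3 hT hS hS' (hc U' (by simp [hU']))
            hSS' (hp S (by simp) U' (by simp [hU'])) (hp S' (by simp) U' (by simp [hU']))
          exact ⟨x, hx.1, hx.2⟩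
        · obtain ⟨x, hx⟩ := helly3 hT hS hS' (hc U (by simp [hU]))
            hSS' (hp S (by simp) U (by simp [hU])) (hp S' (by simp) U (by simp [hU]))
          exact ⟨x, hx.2, hx.1⟩
        · exact hp U (by simp [hU]) U' (by simp [hU']))
      (by simp)
    have hmS : m ∈ S ∩ S' := hm _ (by simp)
    refine ⟨m, ?_⟩
    intro U hU
    rcases List.mem_cons.1 hU with rfl | hU
    · exact hmS.1
    rcases List.mem_cons.1 hU with rfl | hU
    · exact hmS.2
    · exact hm U (by simp [hU])
  termination_by L => L.length

end Aux10

/-- Let `G` be a (finite) region intersection graph over `H` witnessed by regions `R`,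
let `(Wb x : x ∈ V(T))` be a tree-decomposition of `H` of adhesion at most `ℓ`, and let
`W ⊆ V(G)` be such that any two distinct `u, v ∈ W` are joined by `ℓ + 1` pairwise
anti-complete connected subsets of `V(G) \ {u, v}`, each containing a neighbor of `u`
and a neighbor of `v`.  Then some bag `Wb x` intersects `R v` for every `v ∈ W`. -/
theorem statement10 {α β τ : Type*} [Fintype α]
    (G : SimpleGraph α) (H : SimpleGraph β)
    (R : α → Set β)
    (hRconn : ∀ w, ConnectedIn H (R w))
    (hrig : ∀ w w' : α, w ≠ w' → (G.Adj w w' ↔ (R w ∩ R w').Nonempty))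
    (T : SimpleGraph τ) (hT : T.IsTree) (Wb : τ → Set β)
    (hedges : ∀ a b : β, H.Adj a b → ∃ x : τ, a ∈ Wb x ∧ b ∈ Wb x)
    (hsubtree : ∀ b : β, ConnectedIn T {x : τ | b ∈ Wb x})
    (ℓ : ℕ)
    (hadh : ∀ x y : τ, T.Adj x y → (Wb x ∩ Wb y).encard ≤ (ℓ : ℕ∞))
    (W : Set α)
    (hW : ∀ u ∈ W, ∀ v ∈ W, u ≠ v →
      ∃ Q : Fin (ℓ + 1) → Set α,
        (∀ i, Q i ⊆ ({u, v} : Set α)ᶜ) ∧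
        (Pairwise fun i j => Disjoint (Q i) (Q j)) ∧
        (Pairwise fun i j => ∀ a ∈ Q i, ∀ b ∈ Q j, ¬ G.Adj a b) ∧
        (∀ i, ConnectedIn G (Q i)) ∧
        (∀ i, ∃ a ∈ Q i, G.Adj u a) ∧
        (∀ i, ∃ a ∈ Q i, G.Adj v a)) :
    ∃ x : τ, ∀ v ∈ W, (Wb x ∩ R v).Nonempty := by
  classical
  have hτ : Nonempty τ := hT.isConnected.nonempty
  obtain ⟨xdef⟩ := hτ
  by_cases hWne : W.Nonempty
  swap
  · exact ⟨xdef, fun v hv => absurd ⟨v, hv⟩ hWne⟩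
  set Tv : α → Set τ := fun w => {x | (Wb x ∩ R w).Nonempty} with hTvdef
  have hTvConn : ∀ w, Aux10.Conn T (Tv w) := by
    intro w a ha b hb
    obtain ⟨b0, hb0W, hb0R⟩ := ha
    obtain ⟨b1, hb1W, hb1R⟩ := hb
    obtain ⟨wH, hwH⟩ := Aux10.connectedIn_reachIn (hRconn w) hb0R hb1R
    have h2 := Aux10.chainReach (X := H) (K := T) (Q := R w) (F := fun c => {x | c ∈ Wb x})
      (fun c _ x hx y hy => Aux10.connectedIn_reachIn (hsubtree c) hx hy)
      (fun c _ c' _ hadj' => by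
        obtain ⟨t, ht, ht'⟩ := hedges c c' hadj'
        exact ⟨t, ht, ht'⟩)
      wH hwH (x := a) hb0W (y := b) hb1W
    refine h2.mono ?_
    intro t ht
    simp only [Set.mem_iUnion] at ht
    obtain ⟨c, hc, htc⟩ := ht
    exact ⟨c, htc, hc⟩
  have hTvNe : ∀ w, (Tv w).Nonempty := by
    intro w
    obtain ⟨b, hb⟩ := Aux10.connectedIn_nonempty (hRconn w)
    obtain ⟨x, hx⟩ := Aux10.connectedIn_nonempty (hsubtree b)
    exact ⟨x, b, hx, hb⟩
  have hpair : ∀ u ∈ W, ∀ v ∈ W, (Tv u ∩ Tv v).Nonempty := by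
    intro u hu v hv
    rcases eq_or_ne u v with rfl | hne
    · obtain ⟨x, hx⟩ := hTvNe u; exact ⟨x, hx, hx⟩
    by_contra hcon
    rw [Set.not_nonempty_iff_eq_empty] at hcon
    obtain ⟨Q, hQsub, hQdisj, hQanti, hQconn, hQu, hQv⟩ := hW u hu v hv hne
    set C : Fin (ℓ + 1) → Set β := fun i => ⋃ a ∈ Q i, R a with hCdef
    have hCreach : ∀ i, ∀ x ∈ C i, ∀ y ∈ C i, Aux10.ReachIn H (C i) x y := by
      intro i x hx y hy
      simp only [hCdef, Set.mem_iUnion] at hx hy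
      obtain ⟨a, ha, hxa⟩ := hx
      obtain ⟨a', ha', hya⟩ := hy
      obtain ⟨wG, hwG⟩ := Aux10.connectedIn_reachIn (hQconn i) ha ha'
      exact Aux10.chainReach (X := G) (K := H) (Q := Q i) (F := R)
        (fun c _ p hp q hq => Aux10.connectedIn_reachIn (hRconn c) hp hq)
        (fun c _ c' _ hadj' => (hrig c c' hadj'.ne).1 hadj')
        wG hwG x hxa y hya
    have hCu : ∀ i, ∃ b, b ∈ C i ∧ b ∈ R u := by
      intro i
      obtain ⟨a, ha, hadj'⟩ := hQu i
      have hne' : u ≠ a := by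
        intro h
        exact hQsub i ha (by rw [← h]; exact Set.mem_insert _ _)
      obtain ⟨b, hbu, hba⟩ := (hrig u a hne').1 hadj'
      exact ⟨b, Set.mem_biUnion ha hba, hbu⟩
    have hCv : ∀ i, ∃ b, b ∈ C i ∧ b ∈ R v := by
      intro i
      obtain ⟨a, ha, hadj'⟩ := hQv i
      have hne' : v ≠ a := by
        intro h
        exact hQsub i ha (by rw [← h]; exact Set.mem_insert_of_mem _ rfl)
      obtain ⟨b, hbv, hba⟩ := (hrig v a hne').1 hadj'
      exact ⟨b, Set.mem_biUnion ha hba, hbv⟩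
    obtain ⟨x0, hx0⟩ := hTvNe u
    obtain ⟨y0, hy0⟩ := hTvNe v
    have hy0n : y0 ∉ Tv u := by
      intro h
      have hmem : y0 ∈ Tv u ∩ Tv v := ⟨h, hy0⟩
      rw [hcon] at hmem
      exact absurd hmem (Set.notMem_empty _)
    obtain ⟨w0⟩ := hT.isConnected.preconnected x0 y0
    obtain ⟨x', z, hxz, hx'Tu, hzTu, w₂, hw₂⟩ :=
      Aux10.crossEdge (Tv u) (w0.toPath : T.Walk x0 y0) w0.toPath.2 hx0 hy0n
    have hTuA : ∀ t ∈ Tv u, t ∈ Aux10.Side T x' z := by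
      intro t ht
      by_contra htn
      obtain ⟨wt, hwt⟩ := hTvConn u t ht x' hx'Tu
      have hzw := Aux10.not_side_walk hT hxz htn wt
      exact hzTu (hwt z hzw)
    have hy0A : y0 ∉ Aux10.Side T x' z := by
      intro hy0A
      have hmem := hy0A w₂.reverse
      rw [SimpleGraph.Walk.support_reverse, List.mem_reverse] at hmem
      exact hw₂ hmem
    have hTvB : ∀ t ∈ Tv v, t ∉ Aux10.Side T x' z := by
      intro t ht htA
      obtain ⟨wt, hwt⟩ := hTvConn v t ht y0 hy0
      have hx'mem := (Aux10.side_cross hT hxz htA hy0A wt).1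
      have hx'Tv : x' ∈ Tv v := hwt x' hx'mem
      have hmem : x' ∈ Tv u ∩ Tv v := ⟨hx'Tu, hx'Tv⟩
      rw [hcon] at hmem
      exact absurd hmem (Set.notMem_empty _)
    have hsep : ∀ i, ∃ d, d ∈ C i ∧ d ∈ Wb x' ∧ d ∈ Wb z := by
      intro i
      obtain ⟨b, hbC, hbR⟩ := hCu i
      obtain ⟨b', hbC', hbR'⟩ := hCv i
      obtain ⟨wq, hwq⟩ := hCreach i b hbC b' hbC'
      have hPb : ∀ t, b ∈ Wb t → t ∈ Aux10.Side T x' z :=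
        fun t ht => hTuA t ⟨b, ht, hbR⟩
      have hPb' : ¬ (∀ t, b' ∈ Wb t → t ∈ Aux10.Side T x' z) := by
        obtain ⟨t1, ht1⟩ := Aux10.connectedIn_nonempty (hsubtree b')
        intro hall
        exact hTvB t1 ⟨b', ht1, hbR'⟩ (hall t1 ht1)
      obtain ⟨c, d, hcd, hc, hd, hcs, hds⟩ :=
        Aux10.crossProp (fun c => ∀ t, c ∈ Wb t → t ∈ Aux10.Side T x' z) wq hPb hPb'
      obtain ⟨t, htc, htd⟩ := hedges c d hcd
      push_neg at hd
      obtain ⟨t1, ht1d, ht1A⟩ := hd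
      obtain ⟨wd, hwd⟩ := Aux10.connectedIn_reachIn (hsubtree d) htd ht1d
      obtain ⟨hxm, hzm⟩ := Aux10.side_cross hT hxz (hc t htc) ht1A wd
      exact ⟨d, hwq d hds, hwd x' hxm, hwd z hzm⟩
    choose s hsC hsx hsz using hsep
    have hsinj : Function.Injective s := by
      intro i j hij
      by_contra hne'
      have hdisjC : Disjoint (C i) (C j) := by
        rw [Set.disjoint_left]
        intro b hbi hbj
        simp only [hCdef, Set.mem_iUnion] at hbi hbj
        obtain ⟨a, ha, hba⟩ := hbi
        obtain ⟨a', ha', hba'⟩ := hbj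
        have hanea : a ≠ a' := by
          intro h
          exact (Set.disjoint_left.1 (hQdisj hne') ha) (h ▸ ha')
        have hnadj : ¬ G.Adj a a' := hQanti hne' a ha a' ha'
        rw [hrig a a' hanea] at hnadj
        exact hnadj ⟨b, hba, hba'⟩
      exact (Set.disjoint_left.1 hdisjC (hsC i)) (hij ▸ hsC j)
    have hrange : Set.range s ⊆ Wb x' ∩ Wb z := by
      rintro _ ⟨i, rfl⟩; exact ⟨hsx i, hsz i⟩
    have h1 : (Set.range s).encard = ((ℓ + 1 : ℕ) : ℕ∞) := by
      rw [← Set.image_univ, Set.InjOn.encard_image hsinj.injOn, Set.encard_univ]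
      simp
    have h2 := Set.encard_mono hrange
    rw [h1] at h2
    have h3 := h2.trans (hadh x' z hxz)
    rw [Nat.cast_le] at h3
    omega
  obtain ⟨m, hm⟩ := Aux10.hellyList hT (W.toFinite.toFinset.toList.map Tv)
    (by
      intro S hS
      obtain ⟨w, _, rfl⟩ := List.mem_map.1 hS
      exact hTvConn w)
    (by
      intro S hS S' hS'
      obtain ⟨w, hw, rfl⟩ := List.mem_map.1 hS
      obtain ⟨w', hw', rfl⟩ := List.mem_map.1 hS'
      exact hpair w ((W.toFinite.mem_toFinset).1 (Finset.mem_toList.1 hw))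
        w' ((W.toFinite.mem_toFinset).1 (Finset.mem_toList.1 hw')))
    (by
      obtain ⟨v0, hv0⟩ := hWne
      have hv0' : Tv v0 ∈ W.toFinite.toFinset.toList.map Tv :=
        List.mem_map_of_mem (f := Tv) (Finset.mem_toList.2 ((W.toFinite.mem_toFinset).2 hv0))
      intro h
      rw [h] at hv0'
      exact absurd hv0' List.not_mem_nil)
  refine ⟨m, fun v hv => ?_⟩
  exact hm (Tv v) (List.mem_map_of_mem (f := Tv) (Finset.mem_toList.2 ((W.toFinite.mem_toFinset).2 hv)))
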